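/- Let y_1, …, y_n be nonzero vectors in ℝ^q, let c′ > 0, and let μ > 1 + c′·n. If S is a symmetric q×q real matrix with I ⪯ S ⪯ μI (Loewner order), then I ⪯ G(S) ⪯ (1 + c′n)·I; in particular G maps the set D = {S symmetric : I ⪯ S ⪯ μI} into itself. -/

import Mathlib

open Matrix Classical

/-- Principal (symmetric positive semidefinite) square root of a matrix;
junk value `0` if the matrix is not positive semidefinite. -/
noncomputable def matSqrt {q : ℕ} (A : Matrix (Fin q) (Fin q) ℝ) : Matrix (Fin q) (Fin q) ℝ :=
  if h : A.PosSemidef then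
    (h.1.eigenvectorUnitary : Matrix (Fin q) (Fin q) ℝ) *
      diagonal ((↑) ∘ (√·) ∘ h.1.eigenvalues) *
      (star h.1.eigenvectorUnitary : Matrix (Fin q) (Fin q) ℝ)
  else 0

/-- Loewner order: `loewnerLE A B` iff `B - A` is positive semidefinite. -/
def loewnerLE {q : ℕ} (A B : Matrix (Fin q) (Fin q) ℝ) : Prop := (B - A).PosSemidef

/-- Largest eigenvalue of a (Hermitian) matrix; junk value `0` otherwise. -/
noncomputable def maxEig {q : ℕ} (A : Matrix (Fin q) (Fin q) ℝ) : ℝ :=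
  if h : A.IsHermitian then ⨆ i, h.eigenvalues i else 0

/-- Smallest eigenvalue of a (Hermitian) matrix; junk value `0` otherwise. -/
noncomputable def minEig {q : ℕ} (A : Matrix (Fin q) (Fin q) ℝ) : ℝ :=
  if h : A.IsHermitian then ⨅ i, h.eigenvalues i else 0

/-- The matrix `Y` whose columns are the `y i`. -/
def Ymat {q n : ℕ} (y : Fin n → (Fin q → ℝ)) : Matrix (Fin q) (Fin n) ℝ :=
  Matrix.of fun i j => y j i

/-- The map `G(S) = I + c' · S^(1/2) Y D_S Yᵀ S^(1/2)`, where `D_S` is diagonal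
with entries `1 / (yᵢᵀ S yᵢ)`. -/
noncomputable def Gmap {q n : ℕ} (y : Fin n → (Fin q → ℝ)) (c' : ℝ)
    (S : Matrix (Fin q) (Fin q) ℝ) : Matrix (Fin q) (Fin q) ℝ :=
  1 + c' • (matSqrt S * Ymat y * Matrix.diagonal (fun i => (y i ⬝ᵥ S *ᵥ y i)⁻¹)
      * (Ymat y)ᵀ * matSqrt S)

/-- Auxiliary: a nonnegative scalar multiple of a PSD matrix is PSD. -/
lemma psd_smul_aux {q : ℕ} {c : ℝ} {A : Matrix (Fin q) (Fin q) ℝ} (hc : 0 ≤ c)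
    (hA : A.PosSemidef) : (c • A).PosSemidef := by
  refine Matrix.PosSemidef.of_dotProduct_mulVec_nonneg ?_ ?_
  · simpa [Matrix.IsHermitian, Matrix.conjTranspose_smul] using congrArg (c • ·) hA.1.eq
  · intro x
    rw [Matrix.smul_mulVec, dotProduct_smul, smul_eq_mul]
    exact mul_nonneg hc (hA.dotProduct_mulVec_nonneg x)

/-- Auxiliary: the square root is PSD and squares to `S`. -/
lemma matSqrt_aux {q : ℕ} (S : Matrix (Fin q) (Fin q) ℝ) (hSpsd : S.PosSemidef) :
    (matSqrt S).PosSemidef ∧ matSqrt S * matSqrt S = S := by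
  set U : Matrix (Fin q) (Fin q) ℝ := (hSpsd.1.eigenvectorUnitary : Matrix (Fin q) (Fin q) ℝ) with hU
  set d : Fin q → ℝ := ((↑) ∘ (√·) ∘ hSpsd.1.eigenvalues) with hd
  have hR : matSqrt S = U * diagonal d * star U := by rw [matSqrt, dif_pos hSpsd]
  have hUU : star U * U = 1 := Unitary.coe_star_mul_self _
  constructor
  · rw [hR]
    have hD : (diagonal d).PosSemidef :=
      Matrix.posSemidef_diagonal_iff.mpr fun i => by simp [hd, Real.sqrt_nonneg]
    exact hD.mul_mul_conjTranspose_same U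
  · rw [hR]
    have h2 : U * diagonal d * star U * (U * diagonal d * star U)
        = U * (diagonal d * (star U * U) * diagonal d) * star U := by
      simp only [Matrix.mul_assoc]
    rw [h2, hUU, Matrix.mul_one, diagonal_mul_diagonal]
    conv_rhs => rw [hSpsd.1.spectral_theorem, Unitary.conjStarAlgAut_apply]
    congr 3
    funext i
    simp [hd, Real.mul_self_sqrt (hSpsd.eigenvalues_nonneg i)]

/-- Auxiliary: the quadratic form of `B * diagonal d * Bᵀ`. -/
lemma quad_eq_aux {q n : ℕ} (B : Matrix (Fin q) (Fin n) ℝ) (d : Fin n → ℝ) (x : Fin q → ℝ) :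
    x ⬝ᵥ (B * Matrix.diagonal d * Bᵀ) *ᵥ x = ∑ i, d i * ((Bᵀ *ᵥ x) i) ^ 2 := by
  rw [← Matrix.mulVec_mulVec, ← Matrix.mulVec_mulVec, Matrix.dotProduct_mulVec,
    ← Matrix.mulVec_transpose]
  simp only [dotProduct, Matrix.mulVec_diagonal]
  exact Finset.sum_congr rfl fun i _ => by ring

/-- If the `yᵢ` are nonzero, `c' > 0` and `μ > 1 + c'·n`, then for every symmetric `S`
with `I ⪯ S ⪯ μI` we have `I ⪯ G(S) ⪯ (1 + c'n)·I`; in particular `G(S)` lies again in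
`D = {S symmetric : I ⪯ S ⪯ μI}`. -/
theorem Gmap_maps_D_to_D {q n : ℕ}
    (y : Fin n → (Fin q → ℝ)) (hy : ∀ i, y i ≠ 0)
    {c' : ℝ} (hc' : 0 < c') {μ : ℝ} (hμ : 1 + c' * n < μ)
    (S : Matrix (Fin q) (Fin q) ℝ) (hS : S.IsHermitian)
    (hS1 : loewnerLE 1 S) (hS2 : loewnerLE S (μ • 1)) :
    loewnerLE 1 (Gmap y c' S) ∧ loewnerLE (Gmap y c' S) ((1 + c' * n) • 1) ∧
      (Gmap y c' S).IsHermitian ∧ loewnerLE (Gmap y c' S) (μ • 1) := by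
  have hSpsd : S.PosSemidef := by
    have h := Matrix.PosSemidef.add hS1 (Matrix.PosSemidef.one)
    simpa using h
  set R := matSqrt S with hRdef
  have hmat : matSqrt S = R := rfl
  have hRpsd : R.PosSemidef := (matSqrt_aux S hSpsd).1
  have hRh : Rᴴ = R := hRpsd.1
  have hRt : Rᵀ = R := by
    have := hRh
    ext i j
    have h2 := congrFun (congrFun this i) j
    simpa [Matrix.conjTranspose_apply] using h2
  have hRR : R * R = S := (matSqrt_aux S hSpsd).2
  set t : Fin n → ℝ := fun i => y i ⬝ᵥ S *ᵥ y i with htdef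
  have ht : ∀ i, 0 < t i := by
    intro i
    have h1 : (0:ℝ) ≤ y i ⬝ᵥ (S - 1) *ᵥ y i := by simpa using hS1.dotProduct_mulVec_nonneg (y i)
    have h2 : (0:ℝ) < y i ⬝ᵥ y i := by
      simpa using dotProduct_star_self_pos_iff.mpr (hy i)
    have h3 : y i ⬝ᵥ (S - 1) *ᵥ y i = t i - y i ⬝ᵥ y i := by
      rw [Matrix.sub_mulVec, dotProduct_sub, Matrix.one_mulVec]
    rw [h3] at h1; linarith
  set D := Matrix.diagonal (fun i => (t i)⁻¹) with hDdef
  set M := R * Ymat y * D * (Ymat y)ᵀ * R with hMdef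
  have hG : Gmap y c' S = 1 + c' • M := by rw [Gmap, hmat]
  have hYct : (Ymat y)ᴴ = (Ymat y)ᵀ := by
    ext i j; simp [Matrix.conjTranspose_apply]
  have hDpsd : D.PosSemidef :=
    Matrix.posSemidef_diagonal_iff.mpr fun i => inv_nonneg.mpr (ht i).le
  -- M as B * D * Bᵀ with B = R * Ymat y
  have hBt : (R * Ymat y)ᵀ = (Ymat y)ᵀ * R := by rw [Matrix.transpose_mul, hRt]
  have hMform : M = (R * Ymat y) * D * (R * Ymat y)ᵀ := by
    rw [hBt, hMdef, Matrix.mul_assoc]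
  have hMpsd : M.PosSemidef := by
    rw [hMform]
    have h := hDpsd.mul_mul_conjTranspose_same (R * Ymat y)
    rwa [Matrix.conjTranspose_mul, hYct, hRh, ← hBt] at h
  -- quadratic form bound:  x ⬝ᵥ M *ᵥ x ≤ n * (x ⬝ᵥ x)
  have hbound : ∀ x : Fin q → ℝ, x ⬝ᵥ M *ᵥ x ≤ (n : ℝ) * (x ⬝ᵥ x) := by
    intro x
    rw [hMform, quad_eq_aux]
    have hterm : ∀ i : Fin n, (t i)⁻¹ * (((R * Ymat y)ᵀ *ᵥ x) i) ^ 2 ≤ x ⬝ᵥ x := by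
      intro i
      set v : Fin q → ℝ := R *ᵥ y i with hvdef
      have hvi : ((R * Ymat y)ᵀ *ᵥ x) i = v ⬝ᵥ x := by
        have h1 : ((R * Ymat y)ᵀ *ᵥ x) i = y i ⬝ᵥ (R *ᵥ x) := by
          rw [hBt, ← Matrix.mulVec_mulVec]
          simp [Matrix.mulVec, dotProduct, Ymat, Matrix.transpose_apply]
        rw [h1, Matrix.dotProduct_mulVec, ← Matrix.mulVec_transpose, hRt, hvdef]
      have hvv : v ⬝ᵥ v = t i := by
        rw [hvdef, Matrix.dotProduct_mulVec, ← Matrix.mulVec_transpose, hRt,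
          Matrix.mulVec_mulVec, hRR]
        exact dotProduct_comm _ _
      have hcs : (v ⬝ᵥ x) ^ 2 ≤ (v ⬝ᵥ v) * (x ⬝ᵥ x) := by
        have h := Finset.sum_mul_sq_le_sq_mul_sq Finset.univ v x
        simpa [dotProduct, sq, Finset.mul_sum] using h
      rw [hvi]
      calc (t i)⁻¹ * (v ⬝ᵥ x) ^ 2 ≤ (t i)⁻¹ * ((t i) * (x ⬝ᵥ x)) := by
            apply mul_le_mul_of_nonneg_left _ (inv_nonneg.mpr (ht i).le)
            rw [← hvv]; exact hcs
        _ = x ⬝ᵥ x := by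
            rw [← mul_assoc, inv_mul_cancel₀ (ht i).ne', one_mul]
    calc ∑ i, (t i)⁻¹ * (((R * Ymat y)ᵀ *ᵥ x) i) ^ 2 ≤ ∑ _i : Fin n, x ⬝ᵥ x :=
          Finset.sum_le_sum fun i _ => hterm i
      _ = (n : ℝ) * (x ⬝ᵥ x) := by simp [Finset.sum_const, nsmul_eq_mul]
  -- upper bound matrix:  (n : ℝ) • 1 - M  is PSD
  have hnM : ((n : ℝ) • (1 : Matrix (Fin q) (Fin q) ℝ) - M).PosSemidef := by
    refine Matrix.PosSemidef.of_dotProduct_mulVec_nonneg ?_ ?_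
    · have h1 : ((n : ℝ) • (1 : Matrix (Fin q) (Fin q) ℝ)).IsHermitian := by
        unfold Matrix.IsHermitian
        rw [Matrix.conjTranspose_smul]
        simp
      exact h1.sub hMpsd.1
    · intro x
      rw [star_trivial]
      rw [Matrix.sub_mulVec, dotProduct_sub, Matrix.smul_mulVec,
        Matrix.one_mulVec, dotProduct_smul, smul_eq_mul]
      have := hbound x
      simpa using sub_nonneg.mpr this
  have hGherm : (Gmap y c' S).IsHermitian := by
    rw [hG]
    exact Matrix.isHermitian_one.add (psd_smul_aux hc'.le hMpsd).1
  have hupper : loewnerLE (Gmap y c' S) ((1 + c' * n) • 1) := by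
    unfold loewnerLE
    have heq : (1 + c' * n) • (1 : Matrix (Fin q) (Fin q) ℝ) - Gmap y c' S
        = c' • ((n : ℝ) • (1 : Matrix (Fin q) (Fin q) ℝ) - M) := by
      rw [hG]
      rw [add_smul, one_smul, smul_sub, smul_smul]
      abel
    rw [heq]
    exact psd_smul_aux hc'.le hnM
  have hlower : loewnerLE 1 (Gmap y c' S) := by
    unfold loewnerLE
    rw [hG, add_sub_cancel_left]
    exact psd_smul_aux hc'.le hMpsd
  refine ⟨hlower, hupper, hGherm, ?_⟩
  unfold loewnerLE
  have heq : μ • (1 : Matrix (Fin q) (Fin q) ℝ) - Gmap y c' S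
      = (μ - (1 + c' * n)) • (1 : Matrix (Fin q) (Fin q) ℝ)
        + ((1 + c' * n) • (1 : Matrix (Fin q) (Fin q) ℝ) - Gmap y c' S) := by
    rw [sub_smul]; abel
  rw [heq]
  exact (psd_smul_aux (by linarith) Matrix.PosSemidef.one).add hupper
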